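/- Assume K is diagonal in the v_n-basis. Let y^δ ∈ Y and α > 0, and suppose the series x* = ∑_n (1/σ_n²) S_α(σ_n ⟨y^δ, u_n⟩) v_n converges in X. Then for every h ∈ X one has Φ_α(x* + h) ≥ Φ_α(x*) + ‖K h‖²; in particular x* is a global minimizer of Φ_α over X. -/

import Mathlib

open scoped InnerProductSpace ENNReal

/-- The soft thresholding function `S_α`. -/
noncomputable def softThresh (α t : ℝ) : ℝ :=
  if t ≤ -(α / 2) then t + α / 2
  else if α / 2 ≤ t then t - α / 2
  else 0

lemma softThresh_key (α t γ h : ℝ) (hα : 0 < α) (hγ : 0 < γ) :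
    2 * (t - softThresh α t) * h
      ≤ α * (|γ⁻¹ * softThresh α t + h| - |γ⁻¹ * softThresh α t|) := by
  have hγ' : 0 < γ⁻¹ := inv_pos.mpr hγ
  unfold softThresh
  split_ifs with h1 h2
  · set c := γ⁻¹ * (t + α / 2) with hc
    have hc0 : c ≤ 0 := mul_nonpos_of_nonneg_of_nonpos hγ'.le (by linarith)
    have h2 : -(c + h) ≤ |c + h| := neg_le_abs _
    have h3 : |c| = -c := abs_of_nonpos hc0
    nlinarith [mul_le_mul_of_nonneg_left h2 hα.le]
  · set c := γ⁻¹ * (t - α / 2) with hc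
    have hc0 : 0 ≤ c := mul_nonneg hγ'.le (by linarith)
    have h4 : c + h ≤ |c + h| := le_abs_self _
    have h3 : |c| = c := abs_of_nonneg hc0
    nlinarith [mul_le_mul_of_nonneg_left h4 hα.le]
  · push_neg at h1 h2
    simp only [mul_zero, zero_add, sub_zero, abs_zero]
    have hab : |t| ≤ α / 2 := by rw [abs_le]; constructor <;> linarith
    nlinarith [abs_nonneg h, le_abs_self (t*h), abs_mul t h, abs_nonneg t]

/-- If the compact operator `K` is diagonal in the `v n`-basis, `α > 0` and the series
`x* = ∑ (1/σ_n²) S_α(σ_n ⟨y^δ, u_n⟩) v_n` converges in `X`, then for every `h ∈ X` one has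
`Φ_α(x* + h) ≥ Φ_α(x*) + ‖K h‖²`; in particular `x*` is a global minimizer of `Φ_α`. -/
theorem l1SVD_global_minimizer {X Y : Type*}
    [NormedAddCommGroup X] [InnerProductSpace ℝ X] [CompleteSpace X]
    [NormedAddCommGroup Y] [InnerProductSpace ℝ Y] [CompleteSpace Y]
    (K : X →L[ℝ] Y) (hK : IsCompactOperator K)
    (σ : ℕ → ℝ) (v : ℕ → X) (u : ℕ → Y)
    (hσ : ∀ n, 0 < σ n) (hv : Orthonormal ℝ v) (hu : Orthonormal ℝ u)
    (hKv : ∀ n, K (v n) = σ n • u n)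
    (hKadj : ∀ n, (ContinuousLinearMap.adjoint K) (u n) = σ n • v n)
    (hcomplete : (Submodule.span ℝ (Set.range v)).topologicalClosure = ⊤)
    (yδ : Y) (α : ℝ) (hα : 0 < α)
    (Φ : X → ℝ≥0∞)
    (hΦ : ∀ x, Φ x = ENNReal.ofReal (‖K x - yδ‖ ^ 2)
        + ENNReal.ofReal α * ∑' n, ENNReal.ofReal (|⟪x, v n⟫_ℝ|))
    (xstar : X)
    (hxstar : HasSum (fun n => ((σ n ^ 2)⁻¹ * softThresh α (σ n * ⟪yδ, u n⟫_ℝ)) • v n) xstar) :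
    ∀ h : X, Φ xstar + ENNReal.ofReal (‖K h‖ ^ 2) ≤ Φ (xstar + h) := by
  intro h
  set b : ℕ → ℝ := fun n => ⟪yδ, u n⟫_ℝ with hbdef
  set t : ℕ → ℝ := fun n => σ n * b n with htdef
  set c : ℕ → ℝ := fun n => (σ n ^ 2)⁻¹ * softThresh α (t n) with hcdef
  -- Step A: coefficients of xstar
  have hxc : ∀ n, ⟪xstar, v n⟫_ℝ = c n := by
    intro n
    have h1 := hxstar.mapL (innerSL ℝ (v n))
    simp only [innerSL_apply_apply, inner_smul_right] at h1
    have h2 : HasSum (fun m => c m * ⟪v n, v m⟫_ℝ) (c n) := by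
      have h3 := hasSum_ite_eq n (c n)
      refine h3.congr_fun fun m => ?_
      rcases eq_or_ne m n with rfl | hmn
      · simp [orthonormal_iff_ite.mp hv m m, hv.1 m]
      · simp [hmn, orthonormal_iff_ite.mp hv n m, (Ne.symm hmn)]
    rw [real_inner_comm]
    exact h1.unique h2
  -- sigma is bounded
  have hσb : ∀ n, σ n ≤ ‖K‖ := by
    intro n
    have h1 : ‖K (v n)‖ ≤ ‖K‖ * ‖v n‖ := K.le_opNorm _
    rw [hKv n, norm_smul, hv.1 n, hu.1 n] at h1
    simpa [abs_of_pos (hσ n)] using h1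
  -- b tends to zero
  have hbsq : Summable fun n => ‖b n‖ ^ 2 := by
    have := hu.inner_products_summable (x := yδ)
    exact this.congr fun n => by rw [real_inner_comm]
  have habs : Filter.Tendsto (fun n => |b n|) Filter.atTop (nhds 0) := by
    have h0 := hbsq.tendsto_atTop_zero
    have h1 : Filter.Tendsto (fun n => Real.sqrt (‖b n‖ ^ 2)) Filter.atTop (nhds 0) := by
      have := (Real.continuous_sqrt.tendsto 0).comp h0
      simpa [Function.comp_def] using this
    refine h1.congr fun n => ?_
    rw [Real.sqrt_sq_eq_abs]
    simp [Real.norm_eq_abs, abs_abs]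
  have htabs : Filter.Tendsto (fun n => |t n|) Filter.atTop (nhds 0) := by
    have hle : ∀ n, |t n| ≤ ‖K‖ * |b n| := by
      intro n
      rw [htdef]
      simp only [abs_mul]
      exact mul_le_mul_of_nonneg_right (by rw [abs_of_pos (hσ n)]; exact hσb n) (abs_nonneg _)
    have hKb : Filter.Tendsto (fun n => ‖K‖ * |b n|) Filter.atTop (nhds 0) := by
      simpa using habs.const_mul ‖K‖
    exact squeeze_zero (fun n => abs_nonneg _) hle hKb
  have hev : ∀ᶠ n in Filter.atTop, |t n| < α / 2 :=
    htabs.eventually_lt_const (half_pos hα)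
  obtain ⟨N, hN⟩ := Filter.eventually_atTop.mp hev
  have hczero : ∀ n, N ≤ n → c n = 0 := by
    intro n hn
    have := abs_lt.mp (hN n hn)
    rw [hcdef]
    simp only
    unfold softThresh
    rw [if_neg (by linarith), if_neg (by linarith), mul_zero]
  have hcsum : Summable fun n => |c n| := by
    apply summable_of_ne_finset_zero (s := Finset.range N)
    intro n hn
    rw [hczero n (by simpa using hn), abs_zero]
  -- the adjoint applied to the residual
  set w : X := (ContinuousLinearMap.adjoint K) (K xstar - yδ) with hwdef
  have hKx : HasSum (fun m => (c m * σ m) • u m) (K xstar) := by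
    have h1 := hxstar.mapL K
    refine h1.congr_fun fun m => ?_
    rw [map_smul, hKv m, smul_smul]
  have hKxu : ∀ n, ⟪u n, K xstar⟫_ℝ = c n * σ n := by
    intro n
    have h1 := hKx.mapL (innerSL ℝ (u n))
    simp only [innerSL_apply_apply, inner_smul_right] at h1
    have h2 : HasSum (fun m => c m * σ m * ⟪u n, u m⟫_ℝ) (c n * σ n) := by
      have h3 := hasSum_ite_eq n (c n * σ n)
      refine h3.congr_fun fun m => ?_
      rcases eq_or_ne m n with rfl | hmn
      · simp [orthonormal_iff_ite.mp hu m m, hu.1 m]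
      · simp [hmn, orthonormal_iff_ite.mp hu n m, (Ne.symm hmn)]
    exact h1.unique h2
  have hwv : ∀ n, ⟪w, v n⟫_ℝ = softThresh α (t n) - t n := by
    intro n
    rw [real_inner_comm, hwdef, ContinuousLinearMap.adjoint_inner_right, hKv n,
      inner_sub_right, inner_smul_left, inner_smul_left]
    rw [hKxu n]
    have hb' : ⟪u n, yδ⟫_ℝ = b n := real_inner_comm _ _
    rw [hb']
    have hσ2 : (σ n : ℝ) ^ 2 ≠ 0 := pow_ne_zero 2 (hσ n).ne'
    rw [hcdef]
    simp only [RCLike.star_def, starRingEnd_apply, star_trivial]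
    have hσ0 : σ n ≠ 0 := (hσ n).ne'
    simp only [htdef]
    field_simp
  -- Parseval via Hilbert basis
  let e : HilbertBasis ℕ ℝ X := HilbertBasis.mk hv (le_of_eq hcomplete.symm)
  have hcoe : ⇑e = v := HilbertBasis.coe_mk hv _
  have hwh : HasSum (fun n => (softThresh α (t n) - t n) * ⟪v n, h⟫_ℝ) ⟪w, h⟫_ℝ := by
    have h1 := e.hasSum_inner_mul_inner w h
    rw [hcoe] at h1
    exact h1.congr_fun fun n => by rw [hwv n]
  by_cases hsum : Summable fun n => |⟪xstar + h, v n⟫_ℝ|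
  · -- finite case
    have hch : ∀ n, ⟪xstar + h, v n⟫_ℝ = c n + ⟪h, v n⟫_ℝ := by
      intro n; rw [inner_add_left, hxc]
    have hsum2 : Summable fun n => |c n + ⟪h, v n⟫_ℝ| :=
      hsum.congr fun n => by rw [hch]
    -- pointwise key inequality
    have hpt : ∀ n, 0 ≤ 2 * (softThresh α (t n) - t n) * ⟪v n, h⟫_ℝ
        + α * (|c n + ⟪h, v n⟫_ℝ| - |c n|) := by
      intro n
      have hk := softThresh_key α (t n) (σ n ^ 2) (⟪h, v n⟫_ℝ) hα (pow_pos (hσ n) 2)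
      simp only [hcdef]
      rw [real_inner_comm h (v n)]
      linarith
    set g1 : ℕ → ℝ := fun n => (softThresh α (t n) - t n) * ⟪v n, h⟫_ℝ with hg1def
    set g2 : ℕ → ℝ := fun n => |c n + ⟪h, v n⟫_ℝ| - |c n| with hg2def
    set S1 : ℝ := ∑' n, |c n| with hS1def
    set S2 : ℝ := ∑' n, |c n + ⟪h, v n⟫_ℝ| with hS2def
    have hg1s : Summable fun n => 2 * g1 n := hwh.summable.mul_left 2
    have hg2s : Summable fun n => α * g2 n := (hsum2.sub hcsum).mul_left α
    have hkey : 0 ≤ 2 * ⟪w, h⟫_ℝ + α * (S2 - S1) := by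
      have h0 : 0 ≤ ∑' n, (2 * g1 n + α * g2 n) := tsum_nonneg fun n => (hpt n).trans_eq (by simp only [hg1def, hg2def]; ring)
      rwa [hg1s.tsum_add hg2s, tsum_mul_left, tsum_mul_left, hwh.tsum_eq,
        hg2def, hsum2.tsum_sub hcsum] at h0
    have hwKh : ⟪w, h⟫_ℝ = ⟪K xstar - yδ, K h⟫_ℝ := by
      rw [hwdef, ContinuousLinearMap.adjoint_inner_left]
    have hS1n : (0:ℝ) ≤ S1 := tsum_nonneg fun n => abs_nonneg _
    have hS2n : (0:ℝ) ≤ S2 := tsum_nonneg fun n => abs_nonneg _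
    rw [hΦ xstar, hΦ (xstar + h)]
    have e1 : ∑' n, ENNReal.ofReal |⟪xstar, v n⟫_ℝ| = ENNReal.ofReal S1 := by
      simp only [hxc]
      exact (ENNReal.ofReal_tsum_of_nonneg (fun n => abs_nonneg _) hcsum).symm
    have e2 : ∑' n, ENNReal.ofReal |⟪xstar + h, v n⟫_ℝ| = ENNReal.ofReal S2 := by
      simp only [hch]
      exact (ENNReal.ofReal_tsum_of_nonneg (fun n => abs_nonneg _) hsum2).symm
    rw [e1, e2, ← ENNReal.ofReal_mul hα.le, ← ENNReal.ofReal_mul hα.le]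
    have lhs_eq : ENNReal.ofReal (‖K xstar - yδ‖ ^ 2) + ENNReal.ofReal (α * S1)
        + ENNReal.ofReal (‖K h‖ ^ 2)
        = ENNReal.ofReal (‖K xstar - yδ‖ ^ 2 + α * S1 + ‖K h‖ ^ 2) := by
      rw [← ENNReal.ofReal_add (by positivity) (mul_nonneg hα.le hS1n),
        ← ENNReal.ofReal_add (by positivity) (by positivity)]
    have rhs_eq : ENNReal.ofReal (‖K (xstar + h) - yδ‖ ^ 2) + ENNReal.ofReal (α * S2)
        = ENNReal.ofReal (‖K (xstar + h) - yδ‖ ^ 2 + α * S2) := by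
      rw [← ENNReal.ofReal_add (by positivity) (mul_nonneg hα.le hS2n)]
    rw [lhs_eq, rhs_eq]
    apply ENNReal.ofReal_le_ofReal
    have hnorm : ‖K (xstar + h) - yδ‖ ^ 2
        = ‖K xstar - yδ‖ ^ 2 + 2 * ⟪K xstar - yδ, K h⟫_ℝ + ‖K h‖ ^ 2 := by
      have hre : K (xstar + h) - yδ = (K xstar - yδ) + K h := by
        rw [map_add]; abel
      rw [hre, norm_add_sq_real]
    rw [hnorm]
    nlinarith [hkey, hwKh]
  · -- infinite case : RHS is ⊤
    have htop : (∑' n, ENNReal.ofReal (|⟪xstar + h, v n⟫_ℝ|)) = ⊤ := by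
      by_contra hne
      apply hsum
      have h1 := ENNReal.summable_toReal hne
      exact h1.congr fun n => ENNReal.toReal_ofReal (abs_nonneg _)
    rw [hΦ (xstar + h), htop, ENNReal.mul_top (ENNReal.ofReal_pos.mpr hα).ne']
    simp
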